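/- arXiv:2003.05140 — 2 statements merged into one kernel-verified Lean document; each statement's English description precedes it below -/
import Mathlib

section
/- For every β ≥ 0, every real sequence ω = (ω_n)_{n≥1}, every ρ ∈ (0,1] and all N_1, N_2 ∈ ℕ: Ẑ_{N_1+N_2, ω}(ρ) ≥ Ẑ_{N_1, ω}(ρ) · Ẑ_{N_2, θ^{N_1}ω}(ρ), where Ẑ_{N,ω}(ρ) := min over m ∈ {⌊ρN⌋, ⌈ρN⌉} of 𝒵_{N,m,ω,β}, and (θ^k ω)_n := ω_{n+k}. -/
open Finset
open scoped Classical

namespace St17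

def comps (N m : ℕ) : Finset (Fin m → ℕ) :=
  (Fintype.piFinset fun _ => Finset.Icc 1 N).filter (fun a => ∑ i, a i = N)

lemma mem_comps {N m : ℕ} {a : Fin m → ℕ} :
    a ∈ comps N m ↔ (∀ i, a i ∈ Finset.Icc 1 N) ∧ ∑ i, a i = N := by
  simp [comps, Fintype.mem_piFinset]

def psum {m : ℕ} (a : Fin m → ℕ) (k : ℕ) : ℕ :=
  ∑ i : Fin m, if (i : ℕ) < k then a i else 0

def hits {m : ℕ} (a : Fin m → ℕ) (j : ℕ) : Prop :=
  ∃ k, k ≤ m ∧ psum a k = j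

noncomputable def gval (N m : ℕ) (ω : ℕ → ℝ) (β : ℝ) (a : Fin m → ℕ) : ℝ :=
  Real.exp (β * ∑ j ∈ Finset.Icc 1 N, ω j * (if hits a j then (1:ℝ) else 0))

lemma psum_all {m : ℕ} (a : Fin m → ℕ) : psum a m = ∑ i, a i := by
  simp [psum, Fin.is_lt]

lemma psum_mono {m : ℕ} (a : Fin m → ℕ) {k k' : ℕ} (h : k ≤ k') :
    psum a k ≤ psum a k' := by
  apply Finset.sum_le_sum
  intro i _
  split_ifs with h1 h2
  · exact le_rfl
  · exact absurd (lt_of_lt_of_le h1 h) h2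
  · exact Nat.zero_le _
  · exact le_rfl

lemma psum_le_total {m : ℕ} (a : Fin m → ℕ) (k : ℕ) : psum a k ≤ ∑ i, a i := by
  apply Finset.sum_le_sum
  intro i _
  split_ifs
  · exact le_rfl
  · exact Nat.zero_le _

lemma psum_pos {m : ℕ} (a : Fin m → ℕ) (ha : ∀ i, 1 ≤ a i) {k : ℕ}
    (hk : 1 ≤ k) (hm : 0 < m) : 1 ≤ psum a k := by
  have h0 : (0 : ℕ) < k := hk
  calc (1:ℕ) ≤ (if ((⟨0, hm⟩ : Fin m) : ℕ) < k then a ⟨0, hm⟩ else 0) := by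
        simp [h0]; exact ha _
    _ ≤ psum a k := Finset.single_le_sum (f := fun i : Fin m => if (i:ℕ) < k then a i else 0)
        (fun i _ => Nat.zero_le _) (Finset.mem_univ _)

lemma psum_append_left {m₁ m₂ : ℕ} (a₁ : Fin m₁ → ℕ) (a₂ : Fin m₂ → ℕ) {k : ℕ}
    (hk : k ≤ m₁) : psum (Fin.append a₁ a₂) k = psum a₁ k := by
  unfold psum
  rw [Fin.sum_univ_add]
  have h2 : ∀ i : Fin m₂, (if ((Fin.natAdd m₁ i : Fin (m₁+m₂)) : ℕ) < k then Fin.append a₁ a₂ (Fin.natAdd m₁ i) else 0) = 0 := by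
    intro i
    have : ¬ (m₁ + (i:ℕ) < k) := by omega
    simp [Fin.natAdd, this]
  simp only [h2, Finset.sum_const_zero, add_zero]
  apply Finset.sum_congr rfl
  intro i _
  rw [Fin.coe_castAdd, Fin.append_left]

lemma psum_append_right {m₁ m₂ : ℕ} (a₁ : Fin m₁ → ℕ) (a₂ : Fin m₂ → ℕ) (k : ℕ) :
    psum (Fin.append a₁ a₂) (m₁ + k) = (∑ i, a₁ i) + psum a₂ k := by
  unfold psum
  rw [Fin.sum_univ_add]
  congr 1
  · apply Finset.sum_congr rfl
    intro i _
    have : ((Fin.castAdd m₂ i : Fin (m₁+m₂)) : ℕ) < m₁ + k := by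
      rw [Fin.coe_castAdd]; omega
    rw [if_pos this, Fin.append_left]
  · apply Finset.sum_congr rfl
    intro i _
    have h : ((Fin.natAdd m₁ i : Fin (m₁+m₂)) : ℕ) < m₁ + k ↔ (i:ℕ) < k := by
      rw [Fin.coe_natAdd]; omega
    rw [Fin.append_right]
    simp only [h]


lemma hits_append_iff_left {m₁ m₂ N₁ : ℕ} (a₁ : Fin m₁ → ℕ) (a₂ : Fin m₂ → ℕ)
    (hsum : ∑ i, a₁ i = N₁) (ha₂ : ∀ i, 1 ≤ a₂ i) {j : ℕ} (hj : j ≤ N₁) :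
    hits (Fin.append a₁ a₂) j ↔ hits a₁ j := by
  constructor
  · rintro ⟨k, hk, hp⟩
    rcases le_or_gt k m₁ with h | h
    · exact ⟨k, h, by rwa [psum_append_left _ _ h] at hp⟩
    · exfalso
      have hk' : k = m₁ + (k - m₁) := by omega
      rw [hk', psum_append_right, hsum] at hp
      have : 1 ≤ psum a₂ (k - m₁) := psum_pos a₂ ha₂ (by omega) (by omega)
      omega
  · rintro ⟨k, hk, hp⟩
    exact ⟨k, by omega, by rwa [psum_append_left _ _ hk]⟩

lemma hits_append_iff_right {m₁ m₂ N₁ : ℕ} (a₁ : Fin m₁ → ℕ) (a₂ : Fin m₂ → ℕ)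
    (hsum : ∑ i, a₁ i = N₁) {j : ℕ} (hj : 1 ≤ j) :
    hits (Fin.append a₁ a₂) (N₁ + j) ↔ hits a₂ j := by
  constructor
  · rintro ⟨k, hk, hp⟩
    rcases le_or_gt k m₁ with h | h
    · exfalso
      rw [psum_append_left _ _ h] at hp
      have h2 := psum_le_total a₁ k
      omega
    · refine ⟨k - m₁, by omega, ?_⟩
      have hk' : k = m₁ + (k - m₁) := by omega
      rw [hk', psum_append_right, hsum] at hp
      omega
  · rintro ⟨k, hk, hp⟩
    exact ⟨m₁ + k, by omega, by rw [psum_append_right, hsum, hp]⟩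

lemma gval_append {N₁ N₂ m₁ m₂ : ℕ} (ω : ℕ → ℝ) (β : ℝ)
    (a₁ : Fin m₁ → ℕ) (a₂ : Fin m₂ → ℕ)
    (hsum : ∑ i, a₁ i = N₁) (ha₂ : ∀ i, 1 ≤ a₂ i) :
    gval (N₁ + N₂) (m₁ + m₂) ω β (Fin.append a₁ a₂)
      = gval N₁ m₁ ω β a₁ * gval N₂ m₂ (fun n => ω (n + N₁)) β a₂ := by
  unfold gval
  rw [← Real.exp_add, ← mul_add]
  congr 2
  have h1 : ∀ n : ℕ, Finset.Icc 1 n = Finset.Ioc 0 n := fun n => by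
    rw [← Finset.Icc_add_one_left_eq_Ioc, zero_add]
  rw [h1, h1, h1, ← Finset.sum_Ioc_consecutive _ (Nat.zero_le N₁) (Nat.le_add_right N₁ N₂)]
  congr 1
  · apply Finset.sum_congr rfl
    intro j hj
    simp only [Finset.mem_Ioc] at hj
    exact congrArg _ (if_congr (hits_append_iff_left a₁ a₂ hsum ha₂ hj.2) rfl rfl)
  · have hmap : Finset.Ioc N₁ (N₁ + N₂) = Finset.map (addLeftEmbedding N₁) (Finset.Ioc 0 N₂) := by
      rw [Finset.map_add_left_Ioc, add_zero]
    rw [hmap, Finset.sum_map]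
    apply Finset.sum_congr rfl
    intro j hj
    simp only [Finset.mem_Ioc] at hj
    rw [addLeftEmbedding_apply]
    rw [if_congr (hits_append_iff_right a₁ a₂ hsum hj.1) rfl rfl, add_comm N₁ j]

lemma append_mem_comps {N₁ N₂ m₁ m₂ : ℕ} {a₁ : Fin m₁ → ℕ} {a₂ : Fin m₂ → ℕ}
    (h₁ : a₁ ∈ comps N₁ m₁) (h₂ : a₂ ∈ comps N₂ m₂) :
    Fin.append a₁ a₂ ∈ comps (N₁ + N₂) (m₁ + m₂) := by
  rw [mem_comps] at h₁ h₂ ⊢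
  constructor
  · intro i
    refine Fin.addCases (fun i => ?_) (fun i => ?_) i
    · rw [Fin.append_left]
      have := h₁.1 i
      simp only [Finset.mem_Icc] at this ⊢
      omega
    · rw [Fin.append_right]
      have := h₂.1 i
      simp only [Finset.mem_Icc] at this ⊢
      omega
  · rw [Fin.sum_univ_add]
    simp only [Fin.append_left, Fin.append_right, h₁.2, h₂.2]

lemma gval_nonneg {N m : ℕ} (ω : ℕ → ℝ) (β : ℝ) (a : Fin m → ℕ) :
    0 ≤ gval N m ω β a := (Real.exp_pos _).le

lemma sum_le_sum_key {N₁ N₂ m₁ m₂ : ℕ} (ω : ℕ → ℝ) (β : ℝ) (Kr : ℕ → ℝ)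
    (hKr : ∀ n, 0 ≤ Kr n) :
    (∑ a ∈ comps N₁ m₁, gval N₁ m₁ ω β a * ∏ i, Kr (a i)) *
      (∑ a ∈ comps N₂ m₂, gval N₂ m₂ (fun n => ω (n + N₁)) β a * ∏ i, Kr (a i))
    ≤ ∑ a ∈ comps (N₁ + N₂) (m₁ + m₂), gval (N₁ + N₂) (m₁ + m₂) ω β a * ∏ i, Kr (a i) := by
  rw [Finset.sum_mul_sum, ← Finset.sum_product']
  have hterm : ∀ p ∈ (comps N₁ m₁) ×ˢ (comps N₂ m₂),
      gval N₁ m₁ ω β p.1 * (∏ i, Kr (p.1 i)) *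
        (gval N₂ m₂ (fun n => ω (n + N₁)) β p.2 * ∏ i, Kr (p.2 i))
      = gval (N₁ + N₂) (m₁ + m₂) ω β (Fin.append p.1 p.2) *
          ∏ i, Kr (Fin.append p.1 p.2 i) := by
    rintro ⟨a₁, a₂⟩ hp
    rw [Finset.mem_product] at hp
    have h1 := mem_comps.mp hp.1
    have h2 := mem_comps.mp hp.2
    have hsum : ∑ i, a₁ i = N₁ := h1.2
    have ha₂ : ∀ i, 1 ≤ a₂ i := fun i => (Finset.mem_Icc.mp (h2.1 i)).1
    rw [gval_append ω β a₁ a₂ hsum ha₂, Fin.prod_univ_add]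
    simp only [Fin.append_left, Fin.append_right]
    ring
  rw [Finset.sum_congr rfl hterm]
  have hinj : ∀ p ∈ (comps N₁ m₁) ×ˢ (comps N₂ m₂), ∀ q ∈ (comps N₁ m₁) ×ˢ (comps N₂ m₂),
      (fun p : (Fin m₁ → ℕ) × (Fin m₂ → ℕ) => Fin.append p.1 p.2) p
        = (fun p : (Fin m₁ → ℕ) × (Fin m₂ → ℕ) => Fin.append p.1 p.2) q → p = q := by
    rintro ⟨a₁, a₂⟩ _ ⟨b₁, b₂⟩ _ h
    simp only at h
    simp only [Prod.mk.injEq]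
    constructor
    · funext i
      have := congrFun h (Fin.castAdd m₂ i)
      rwa [Fin.append_left, Fin.append_left] at this
    · funext i
      have := congrFun h (Fin.natAdd m₁ i)
      rwa [Fin.append_right, Fin.append_right] at this
  rw [← Finset.sum_image (g := fun p : (Fin m₁ → ℕ) × (Fin m₂ → ℕ) => Fin.append p.1 p.2)
    (f := fun a => gval (N₁ + N₂) (m₁ + m₂) ω β a * ∏ i, Kr (a i)) hinj]
  apply Finset.sum_le_sum_of_subset_of_nonneg
  · intro a ha
    rw [Finset.mem_image] at ha
    obtain ⟨p, hp, rfl⟩ := ha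
    rw [Finset.mem_product] at hp
    exact append_mem_comps hp.1 hp.2
  · intro a _ _
    exact mul_nonneg (gval_nonneg ω β a) (Finset.prod_nonneg fun i _ => hKr _)


open MeasureTheory ProbabilityTheory

lemma rep {Ω : Type*} [MeasurableSpace Ω] (P : Measure Ω) [IsProbabilityMeasure P]
    (η : ℕ → Ω → ℕ) (hηmeas : ∀ j, Measurable (η j))
    (hηindep : iIndepFun η P)
    (hηident : ∀ j, P.map (η j) = P.map (η 0))
    (hηpos : ∀ j x, 1 ≤ η j x)
    (τ : ℕ → Ω → ℕ) (hτ : ∀ m x, τ m x = ∑ j ∈ Finset.range m, η j x)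
    (N m : ℕ) (ω : ℕ → ℝ) (β : ℝ) :
    (∫ x, Real.exp (β * ∑ j ∈ Finset.Icc 1 N, ω j * (if ∃ k, τ k x = j then (1:ℝ) else 0)) *
      (if τ m x = N then (1:ℝ) else 0) ∂P)
      = ∑ a ∈ comps N m, gval N m ω β a * ∏ i, (P {x | η 0 x = a i}).toReal := by
  have hpsum_eq_tau : ∀ (x : Ω) (k : ℕ), k ≤ m →
      psum (fun i : Fin m => η (i : ℕ) x) k = τ k x := by
    intro x k hk
    rw [hτ]
    unfold psum
    rw [Fin.sum_univ_eq_sum_range (fun i => if i < k then η i x else 0) m]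
    rw [← Finset.sum_subset (Finset.range_subset_range.mpr hk)
      (fun j _ hj2 => if_neg (fun hc => hj2 (Finset.mem_range.mpr hc)))]
    exact Finset.sum_congr rfl (fun j hj => if_pos (Finset.mem_range.mp hj))
  have htau_mono : ∀ (x : Ω) (k k' : ℕ), k ≤ k' → τ k x + (k' - k) ≤ τ k' x := by
    intro x k k' hk
    rw [hτ, hτ, Finset.range_eq_Ico, Finset.range_eq_Ico,
      ← Finset.sum_Ico_consecutive _ (Nat.zero_le k) hk, ← Finset.range_eq_Ico]
    have : k' - k ≤ ∑ j ∈ Finset.Ico k k', η j x := by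
      calc k' - k = ∑ _j ∈ Finset.Ico k k', 1 := by
            rw [Finset.sum_const, Nat.card_Ico, smul_eq_mul, mul_one]
        _ ≤ _ := Finset.sum_le_sum (fun j _ => hηpos j x)
    omega
  have hE : ∀ a : Fin m → ℕ, MeasurableSet {x : Ω | ∀ i : Fin m, η (i : ℕ) x = a i} := by
    intro a
    have : {x : Ω | ∀ i : Fin m, η (i : ℕ) x = a i} = ⋂ i : Fin m, (η (i : ℕ)) ⁻¹' {a i} := by
      ext x; simp [Set.mem_iInter]
    rw [this]
    exact MeasurableSet.iInter fun i => (hηmeas i) (measurableSet_singleton _)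
  have hpt : ∀ x : Ω,
      Real.exp (β * ∑ j ∈ Finset.Icc 1 N, ω j * (if ∃ k, τ k x = j then (1:ℝ) else 0)) *
        (if τ m x = N then (1:ℝ) else 0)
      = ∑ a ∈ comps N m,
          Set.indicator {y : Ω | ∀ i : Fin m, η (i : ℕ) y = a i} (fun _ => gval N m ω β a) x := by
    intro x
    by_cases hx : τ m x = N
    · set a₀ : Fin m → ℕ := fun i => η (i : ℕ) x with ha₀
      have hsum₀ : ∑ i, a₀ i = N := by
        rw [← psum_all, hpsum_eq_tau x m le_rfl]; exact hx
      have hmem : a₀ ∈ comps N m := mem_comps.mpr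
        ⟨fun i => Finset.mem_Icc.mpr ⟨hηpos _ x,
          le_trans (Finset.single_le_sum (f := a₀) (fun _ _ => Nat.zero_le _)
            (Finset.mem_univ i)) hsum₀.le⟩, hsum₀⟩
      rw [Finset.sum_eq_single_of_mem a₀ hmem (fun b _ hb =>
        Set.indicator_of_notMem (fun hxb => hb (funext fun i => (hxb i).symm)) _)]
      have hxmem : x ∈ {y : Ω | ∀ i : Fin m, η (i : ℕ) y = a₀ i} := fun i => rfl
      rw [Set.indicator_of_mem hxmem]
      rw [if_pos hx, mul_one]
      unfold gval
      congr 2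
      apply Finset.sum_congr rfl
      intro j hj
      rw [Finset.mem_Icc] at hj
      refine congrArg _ (if_congr ?_ rfl rfl)
      constructor
      · rintro ⟨k, hk⟩
        by_cases h : k ≤ m
        · exact ⟨k, h, by rw [hpsum_eq_tau x k h]; exact hk⟩
        · exfalso
          have := htau_mono x m k (le_of_not_ge h)
          omega
      · rintro ⟨k, hk, hp⟩
        exact ⟨k, by rw [← hpsum_eq_tau x k hk]; exact hp⟩
    · rw [if_neg hx, mul_zero]
      symm
      apply Finset.sum_eq_zero
      intro a ha
      apply Set.indicator_of_notMem
      intro hxa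
      apply hx
      have : (fun i : Fin m => η (i : ℕ) x) = a := funext fun i => hxa i
      rw [← hpsum_eq_tau x m le_rfl, this, psum_all, (mem_comps.mp ha).2]
  have hsingle : ∀ (j c : ℕ), P (η j ⁻¹' {c}) = P {x | η 0 x = c} := by
    intro j c
    have h3 : P.map (η j) {c} = P (η j ⁻¹' {c}) :=
      Measure.map_apply (hηmeas j) (measurableSet_singleton c)
    have h4 : P.map (η 0) {c} = P (η 0 ⁻¹' {c}) :=
      Measure.map_apply (hηmeas 0) (measurableSet_singleton c)
    rw [← h3, hηident j, h4]
    rfl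
  have hPE : ∀ a : Fin m → ℕ,
      P {x : Ω | ∀ i : Fin m, η (i : ℕ) x = a i} = ∏ i : Fin m, P {x | η 0 x = a i} := by
    intro a
    set sets : ℕ → Set ℕ := fun j => if h : j < m then {a ⟨j, h⟩} else Set.univ with hsets
    have hmeas' : ∀ j, j ∈ Finset.range m → MeasurableSet (sets j) := by
      intro j _
      by_cases h : j < m <;> simp [hsets, h]
    have h1 := hηindep.measure_inter_preimage_eq_mul (Finset.range m) hmeas'
    have h2 : (⋂ j ∈ Finset.range m, η j ⁻¹' sets j)
        = {x : Ω | ∀ i : Fin m, η (i : ℕ) x = a i} := by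
      ext x
      simp only [Set.mem_iInter, Finset.mem_range, Set.mem_preimage, Set.mem_setOf_eq]
      constructor
      · intro h i
        have := h (i : ℕ) i.is_lt
        simpa [hsets, i.is_lt] using this
      · intro h j hj
        simp only [hsets, hj, dif_pos]
        exact h ⟨j, hj⟩
    rw [h2] at h1
    rw [h1, ← Fin.prod_univ_eq_prod_range (fun j => P (η j ⁻¹' sets j)) m]
    apply Finset.prod_congr rfl
    intro i _
    have : sets (i : ℕ) = {a i} := by simp [hsets, i.is_lt]
    rw [this, hsingle]
  calc (∫ x, Real.exp (β * ∑ j ∈ Finset.Icc 1 N, ω j * (if ∃ k, τ k x = j then (1:ℝ) else 0)) *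
      (if τ m x = N then (1:ℝ) else 0) ∂P)
      = ∫ x, ∑ a ∈ comps N m,
          Set.indicator {y : Ω | ∀ i : Fin m, η (i : ℕ) y = a i} (fun _ => gval N m ω β a) x ∂P :=
        integral_congr_ae (Filter.Eventually.of_forall hpt)
    _ = ∑ a ∈ comps N m, ∫ x,
          Set.indicator {y : Ω | ∀ i : Fin m, η (i : ℕ) y = a i} (fun _ => gval N m ω β a) x ∂P :=
        integral_finset_sum _ (fun a _ => (integrable_const _).indicator (hE a))
    _ = ∑ a ∈ comps N m, gval N m ω β a * ∏ i, (P {x | η 0 x = a i}).toReal := by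
        apply Finset.sum_congr rfl
        intro a _
        rw [integral_indicator_const _ (hE a), measureReal_def, hPE a, ENNReal.toReal_prod, smul_eq_mul, mul_comm]


lemma floor_decomp {a b : ℝ} (ha : 0 ≤ a) (hb : 0 ≤ b) :
    ∃ m₁ m₂ : ℕ, (m₁ = ⌊a⌋₊ ∨ m₁ = ⌈a⌉₊) ∧ (m₂ = ⌊b⌋₊ ∨ m₂ = ⌈b⌉₊) ∧ m₁ + m₂ = ⌊a + b⌋₊ := by
  have f1 : ⌊a⌋₊ + ⌊b⌋₊ ≤ ⌊a + b⌋₊ := by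
    apply Nat.le_floor
    push_cast
    exact add_le_add (Nat.floor_le ha) (Nat.floor_le hb)
  have f2 : ⌊a + b⌋₊ ≤ ⌊a⌋₊ + ⌈b⌉₊ := by
    calc ⌊a + b⌋₊ ≤ ⌊a + (⌈b⌉₊ : ℝ)⌋₊ :=
          Nat.floor_le_floor (by linarith [Nat.le_ceil b])
      _ = ⌊a⌋₊ + ⌈b⌉₊ := Nat.floor_add_natCast ha _
  have f3 : ⌈b⌉₊ ≤ ⌊b⌋₊ + 1 := Nat.ceil_le_floor_add_one b
  have f4 : ⌊b⌋₊ ≤ ⌈b⌉₊ := Nat.floor_le_ceil b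
  exact ⟨⌊a⌋₊, ⌊a + b⌋₊ - ⌊a⌋₊, Or.inl rfl, by omega, by omega⟩

lemma ceil_decomp {a b : ℝ} (ha : 0 ≤ a) (hb : 0 ≤ b) :
    ∃ m₁ m₂ : ℕ, (m₁ = ⌊a⌋₊ ∨ m₁ = ⌈a⌉₊) ∧ (m₂ = ⌊b⌋₊ ∨ m₂ = ⌈b⌉₊) ∧ m₁ + m₂ = ⌈a + b⌉₊ := by
  have g1 : ⌈a⌉₊ + ⌊b⌋₊ ≤ ⌈a + b⌉₊ := by
    calc ⌈a⌉₊ + ⌊b⌋₊ = ⌈a + (⌊b⌋₊ : ℝ)⌉₊ := (Nat.ceil_add_natCast ha _).symm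
      _ ≤ ⌈a + b⌉₊ := Nat.ceil_le_ceil (by linarith [Nat.floor_le hb])
  have g2 : ⌈a + b⌉₊ ≤ ⌈a⌉₊ + ⌈b⌉₊ := Nat.ceil_add_le a b
  have f3 : ⌈b⌉₊ ≤ ⌊b⌋₊ + 1 := Nat.ceil_le_floor_add_one b
  have f4 : ⌊b⌋₊ ≤ ⌈b⌉₊ := Nat.floor_le_ceil b
  exact ⟨⌈a⌉₊, ⌈a + b⌉₊ - ⌈a⌉₊, Or.inr rfl, by omega, by omega⟩

end St17

open MeasureTheory ProbabilityTheory Filter Set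
open scoped ENNReal Classical

set_option maxHeartbeats 1000000 in
theorem stmt_17
    {Ω : Type*} [MeasurableSpace Ω] (P : Measure Ω) [IsProbabilityMeasure P]
    (η : ℕ → Ω → ℕ) (hηmeas : ∀ j, Measurable (η j))
    (hηindep : iIndepFun η P)
    (hηident : ∀ j, P.map (η j) = P.map (η 0))
    (hηpos : ∀ j x, 1 ≤ η j x)
    (α C_K : ℝ) (hα : 0 < α) (hCK : 0 < C_K)
    (K : ℕ → ℝ) (hK : ∀ n, K n = (P {x | η 0 x = n}).toReal)
    (hKpos : ∀ n, 1 ≤ n → 0 < K n)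
    (hKasymp : Tendsto (fun n : ℕ => K n * (n : ℝ) ^ (1 + α)) atTop (nhds C_K))
    (τ : ℕ → Ω → ℕ) (hτ : ∀ m x, τ m x = ∑ j ∈ Finset.range m, η j x)
    (𝒵 : ℕ → ℕ → (ℕ → ℝ) → ℝ → ℝ)
    (h𝒵 : ∀ N m (ω : ℕ → ℝ) (β : ℝ), 𝒵 N m ω β =
      ∫ x, Real.exp (β * ∑ j ∈ Finset.Icc 1 N,
          ω j * (if ∃ k, τ k x = j then (1:ℝ) else 0)) *
        (if τ m x = N then (1:ℝ) else 0) ∂P)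
    :
    ∀ β : ℝ, 0 ≤ β → ∀ ω : ℕ → ℝ, ∀ ρ : ℝ, 0 < ρ → ρ ≤ 1 →
      ∀ N₁ N₂ : ℕ, 1 ≤ N₁ → 1 ≤ N₂ →
        min (𝒵 (N₁ + N₂) ⌊ρ * ((N₁ + N₂ : ℕ) : ℝ)⌋₊ ω β)
            (𝒵 (N₁ + N₂) ⌈ρ * ((N₁ + N₂ : ℕ) : ℝ)⌉₊ ω β) ≥
          min (𝒵 N₁ ⌊ρ * (N₁ : ℝ)⌋₊ ω β) (𝒵 N₁ ⌈ρ * (N₁ : ℝ)⌉₊ ω β) *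
          min (𝒵 N₂ ⌊ρ * (N₂ : ℝ)⌋₊ (fun n => ω (n + N₁)) β)
              (𝒵 N₂ ⌈ρ * (N₂ : ℝ)⌉₊ (fun n => ω (n + N₁)) β) := by
  intro β hβ ω ρ hρ0 hρ1 N₁ N₂ hN₁ hN₂
  have hZnn : ∀ (N m : ℕ) (ω' : ℕ → ℝ), 0 ≤ 𝒵 N m ω' β := by
    intro N m ω'
    rw [h𝒵]
    apply integral_nonneg
    intro x
    apply mul_nonneg (Real.exp_pos _).le
    split_ifs <;> norm_num
  have hrep : ∀ (N m : ℕ) (ω' : ℕ → ℝ), 𝒵 N m ω' β =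
      ∑ a ∈ St17.comps N m, St17.gval N m ω' β a * ∏ i, (P {x | η 0 x = a i}).toReal :=
    fun N m ω' => (h𝒵 N m ω' β).trans
      (St17.rep P η hηmeas hηindep hηident hηpos τ hτ N m ω' β)
  have hkey : ∀ m₁ m₂ : ℕ,
      𝒵 N₁ m₁ ω β * 𝒵 N₂ m₂ (fun n => ω (n + N₁)) β ≤ 𝒵 (N₁ + N₂) (m₁ + m₂) ω β := by
    intro m₁ m₂
    rw [hrep N₁ m₁ ω, hrep N₂ m₂ (fun n => ω (n + N₁)), hrep (N₁ + N₂) (m₁ + m₂) ω]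
    exact St17.sum_le_sum_key ω β (fun n => (P {x | η 0 x = n}).toReal)
      (fun n => ENNReal.toReal_nonneg)
  have ha : (0:ℝ) ≤ ρ * (N₁ : ℝ) := by positivity
  have hb : (0:ℝ) ≤ ρ * (N₂ : ℝ) := by positivity
  have hcast : ρ * ((N₁ + N₂ : ℕ) : ℝ) = ρ * (N₁ : ℝ) + ρ * (N₂ : ℝ) := by push_cast; ring
  have hQ₂nn : 0 ≤ min (𝒵 N₂ ⌊ρ * (N₂:ℝ)⌋₊ (fun n => ω (n + N₁)) β)
      (𝒵 N₂ ⌈ρ * (N₂:ℝ)⌉₊ (fun n => ω (n + N₁)) β) := le_min (hZnn _ _ _) (hZnn _ _ _)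
  have main : ∀ M : ℕ, (∃ m₁ m₂ : ℕ, (m₁ = ⌊ρ * (N₁:ℝ)⌋₊ ∨ m₁ = ⌈ρ * (N₁:ℝ)⌉₊) ∧
      (m₂ = ⌊ρ * (N₂:ℝ)⌋₊ ∨ m₂ = ⌈ρ * (N₂:ℝ)⌉₊) ∧ m₁ + m₂ = M) →
      min (𝒵 N₁ ⌊ρ * (N₁:ℝ)⌋₊ ω β) (𝒵 N₁ ⌈ρ * (N₁:ℝ)⌉₊ ω β) *
        min (𝒵 N₂ ⌊ρ * (N₂:ℝ)⌋₊ (fun n => ω (n + N₁)) β)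
          (𝒵 N₂ ⌈ρ * (N₂:ℝ)⌉₊ (fun n => ω (n + N₁)) β) ≤ 𝒵 (N₁ + N₂) M ω β := by
    rintro M ⟨m₁, m₂, h1, h2, rfl⟩
    have hZ1 : min (𝒵 N₁ ⌊ρ * (N₁:ℝ)⌋₊ ω β) (𝒵 N₁ ⌈ρ * (N₁:ℝ)⌉₊ ω β) ≤ 𝒵 N₁ m₁ ω β := by
      rcases h1 with h | h <;> rw [h]
      · exact min_le_left _ _
      · exact min_le_right _ _
    have hZ2 : min (𝒵 N₂ ⌊ρ * (N₂:ℝ)⌋₊ (fun n => ω (n + N₁)) β)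
        (𝒵 N₂ ⌈ρ * (N₂:ℝ)⌉₊ (fun n => ω (n + N₁)) β)
        ≤ 𝒵 N₂ m₂ (fun n => ω (n + N₁)) β := by
      rcases h2 with h | h <;> rw [h]
      · exact min_le_left _ _
      · exact min_le_right _ _
    calc _ ≤ 𝒵 N₁ m₁ ω β * 𝒵 N₂ m₂ (fun n => ω (n + N₁)) β :=
          mul_le_mul hZ1 hZ2 hQ₂nn (hZnn _ _ _)
      _ ≤ _ := hkey m₁ m₂
  rw [ge_iff_le, le_min_iff]
  constructor
  · apply main
    rw [hcast]
    exact St17.floor_decomp ha hb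
  · apply main
    rw [hcast]
    exact St17.ceil_decomp ha hb
end

section
/- For every β ≥ 0 and every h ∈ ℝ: liminf_{N→∞} (1/N)·𝔼[ log Z^Ψ_{N,ω,β,h} ] ≥ H(0), where Z^Ψ_{N,ω,β,h} := E[exp( Σ_{j=1}^N (β·ω_j + h)·δ_j )·Ψ(Σ_{j=1}^N δ_j, N)·δ_N] (expectation over τ only, with ω fixed). -/
open MeasureTheory ProbabilityTheory Filter Set
open scoped ENNReal Classical

set_option maxHeartbeats 4000000 in
theorem stmt_19
    {Ω : Type*} [MeasurableSpace Ω] (P : Measure Ω) [IsProbabilityMeasure P]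
    (η : ℕ → Ω → ℕ) (hηmeas : ∀ j, Measurable (η j))
    (hηindep : iIndepFun η P)
    (hηident : ∀ j, P.map (η j) = P.map (η 0))
    (hηpos : ∀ j x, 1 ≤ η j x)
    (α C_K : ℝ) (hα : 0 < α) (hCK : 0 < C_K)
    (K : ℕ → ℝ) (hK : ∀ n, K n = (P {x | η 0 x = n}).toReal)
    (hKpos : ∀ n, 1 ≤ n → 0 < K n)
    (hKasymp : Tendsto (fun n : ℕ => K n * (n : ℝ) ^ (1 + α)) atTop (nhds C_K))
    (τ : ℕ → Ω → ℕ) (hτ : ∀ m x, τ m x = ∑ j ∈ Finset.range m, η j x)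
    (H : ℝ → EReal) (Hr : ℝ → ℝ)
    (hHr : ∀ x ∈ Set.Ioo (0:ℝ) 1, H x = (Hr x : EReal))
    (hHconc : ConcaveOn ℝ (Set.Ioo 0 1) Hr)
    (hHanal : AnalyticOnNhd ℝ Hr (Set.Ioo 0 1))
    (hHcont : ContinuousOn H (Set.Icc 0 1))
    (hHne_top : ∀ x ∈ Set.Icc (0:ℝ) 1, H x ≠ ⊤)
    (Q : ℕ → ℕ → ℝ) (hQnn : ∀ m N, 0 ≤ Q m N)
    (hQub : ∀ b : ℝ, 0 < b → ∃ c : ℝ, 0 < c ∧ ∀ N m : ℕ, m ≤ N → Q m N ≤ c * Real.exp (b * N))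
    (hQlb : ∀ u v : ℝ, 0 < u → u < v → v < 1 → ∀ b : ℝ, 0 < b →
      ∃ c : ℝ, 0 < c ∧ ∀ N m : ℕ, (m : ℝ) / N ∈ Set.Icc u v → c * Real.exp (-b * N) ≤ Q m N)
    (Ψ : ℕ → ℕ → ℝ)
    (hΨ : ∀ m N : ℕ, Ψ m N = if H ((m : ℝ) / N) = ⊥ then 0
      else Q m N * Real.exp ((N : ℝ) * (H ((m : ℝ) / N)).toReal))
    (LN : ℕ → Ω → ℕ)
    (hLN : ∀ N x, LN N x = ((Finset.Icc 1 N).filter (fun n => ∃ k, τ k x = n)).card)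
    {Ω' : Type*} [MeasurableSpace Ω'] (P' : Measure Ω') [IsProbabilityMeasure P']
    (ω : ℕ → Ω' → ℝ) (hωmeas : ∀ j, Measurable (ω j))
    (hωindep : iIndepFun ω P')
    (hωident : ∀ j, 1 ≤ j → P'.map (ω j) = P'.map (ω 1))
    (hωexp : ∀ s : ℝ, Integrable (fun y => Real.exp (s * ω 1 y)) P')
    (hωmean : ∫ y, ω 1 y ∂P' = 0)
    (hωvar : ∫ y, (ω 1 y) ^ 2 ∂P' = 1)
    (ZΨ : ℝ → ℝ → ℕ → Ω' → ℝ)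
    (hZΨ : ∀ (β h : ℝ) (N : ℕ) (y : Ω'), ZΨ β h N y =
      ∫ x, Real.exp (∑ j ∈ Finset.Icc 1 N,
          (β * ω j y + h) * (if ∃ k, τ k x = j then (1:ℝ) else 0)) *
        Ψ (LN N x) N * (if ∃ k, τ k x = N then (1:ℝ) else 0) ∂P)
    :
    ∀ β : ℝ, 0 ≤ β → ∀ h : ℝ,
      H 0 ≤ Filter.liminf (fun N : ℕ =>
        (((1 / (N : ℝ)) * ∫ y, Real.log (ZΨ β h N y) ∂P' : ℝ) : EReal)) atTop := by
  intro β hβ h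
  by_cases hH0 : H 0 = ⊥
  · rw [hH0]; exact bot_le
  have h0mem : (0:ℝ) ∈ Set.Icc (0:ℝ) 1 := ⟨le_refl _, zero_le_one⟩
  have hH0top : H 0 ≠ ⊤ := hHne_top 0 h0mem
  have hH0eq : H 0 = ((H 0).toReal : EReal) := (EReal.coe_toReal hH0top hH0).symm
  -- helper: toReal bound
  have htoReal_le : ∀ (x : EReal) (M : ℝ), x ≤ (M : EReal) → 0 ≤ M → x.toReal ≤ M := by
    intro x M hx hM
    induction x using EReal.rec with
    | bot => simpa using hM
    | coe a => simpa using (by exact_mod_cast hx : a ≤ M)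
    | top => simp at hx
  -- upper bound Mb for (H x).toReal on Icc 0 1
  obtain ⟨g, hgmem, hgub⟩ := (isCompact_Icc.image_of_continuousOn hHcont).exists_isGreatest
      ((Set.nonempty_Icc.2 zero_le_one).image _)
  obtain ⟨x₀, hx₀, hgx₀⟩ := hgmem
  have hgtop : g ≠ ⊤ := hgx₀ ▸ hHne_top x₀ hx₀
  have hgbot : g ≠ ⊥ := by
    intro hb
    apply hH0
    have : H 0 ≤ g := hgub (Set.mem_image_of_mem H h0mem)
    rw [hb] at this
    exact le_bot_iff.1 this
  set Mb : ℝ := max g.toReal 0 with hMbdef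
  have hMb0 : (0:ℝ) ≤ Mb := le_max_right _ _
  have hMb : ∀ x ∈ Set.Icc (0:ℝ) 1, (H x).toReal ≤ Mb := by
    intro x hx
    refine htoReal_le _ _ ?_ hMb0
    have h1 : H x ≤ g := hgub (Set.mem_image_of_mem H hx)
    have h2 : g = (g.toReal : EReal) := (EReal.coe_toReal hgtop hgbot).symm
    calc H x ≤ g := h1
      _ = (g.toReal : EReal) := h2
      _ ≤ (Mb : EReal) := EReal.coe_le_coe_iff.2 (le_max_left _ _)
  -- ω integrability and mean
  have habs : ∀ t : ℝ, |t| ≤ Real.exp t + Real.exp (-t) := by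
    intro t
    rcases abs_cases t with ⟨ht, _⟩ | ⟨ht, _⟩ <;> rw [ht] <;>
      nlinarith [Real.add_one_le_exp t, Real.add_one_le_exp (-t), Real.exp_pos t, Real.exp_pos (-t)]
  have hω1 : Integrable (ω 1) P' := by
    have := (hωexp 1).add (hωexp (-1))
    refine this.mono' (hωmeas 1).aestronglyMeasurable (Filter.Eventually.of_forall fun y => ?_)
    simpa using habs (ω 1 y)
  have hωint : ∀ j, 1 ≤ j → Integrable (ω j) P' ∧ ∫ y, ω j y ∂P' = 0 := by
    intro j hj
    have hmap : Integrable id (P'.map (ω j)) := by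
      rw [hωident j hj, integrable_map_measure aestronglyMeasurable_id (hωmeas 1).aemeasurable]
      simpa using hω1
    have hint : Integrable (ω j) P' := by
      rw [integrable_map_measure aestronglyMeasurable_id (hωmeas j).aemeasurable] at hmap
      simpa using hmap
    refine ⟨hint, ?_⟩
    have h1 : ∫ y, ω j y ∂P' = ∫ x, id x ∂(P'.map (ω j)) := by
      rw [integral_map (hωmeas j).aemeasurable aestronglyMeasurable_id]; rfl
    rw [h1, hωident j hj, integral_map (hωmeas 1).aemeasurable aestronglyMeasurable_id]
    simpa using hωmean
  -- τ facts
  have hτmeas : ∀ k, Measurable (τ k) := by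
    intro k
    have : τ k = fun x => ∑ j ∈ Finset.range k, η j x := funext fun x => hτ k x
    rw [this]
    exact Finset.measurable_sum _ fun j _ => hηmeas j
  have hτ0 : ∀ x, τ 0 x = 0 := fun x => by rw [hτ]; simp
  have hτgap : ∀ x k l, k ≤ l → τ k x + (l - k) ≤ τ l x := by
    intro x k l hkl
    have hsplit : τ l x = τ k x + ∑ j ∈ Finset.Ico k l, η j x := by
      rw [hτ, hτ, Finset.range_eq_Ico, Finset.range_eq_Ico]
      exact (Finset.sum_Ico_consecutive _ (Nat.zero_le k) hkl).symm
    have hlow : l - k ≤ ∑ j ∈ Finset.Ico k l, η j x := by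
      calc l - k = (Finset.Ico k l).card • 1 := by simp [Nat.card_Ico]
        _ ≤ ∑ j ∈ Finset.Ico k l, η j x := Finset.card_nsmul_le_sum _ _ _ fun j _ => hηpos j x
    omega
  have hDmeas : ∀ n, MeasurableSet {x | ∃ k, τ k x = n} := by
    intro n
    have hset : {x | ∃ k, τ k x = n} = ⋃ k ∈ Finset.range (n+1), {x | τ k x = n} := by
      ext x
      simp only [Set.mem_setOf_eq, Set.mem_iUnion, Finset.mem_range]
      constructor
      · rintro ⟨k, hk⟩
        have := hτgap x 0 k (Nat.zero_le k)
        rw [hτ0] at this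
        exact ⟨k, by omega, hk⟩
      · rintro ⟨k, _, hk⟩; exact ⟨k, hk⟩
    rw [hset]
    exact MeasurableSet.biUnion (Finset.range (n+1)).countable_toSet
      fun k _ => (hτmeas k) (measurableSet_singleton n)
  have hLNmeas : ∀ N, Measurable (LN N) := by
    intro N
    have : LN N = fun x => ∑ n ∈ Finset.Icc 1 N, if ∃ k, τ k x = n then 1 else 0 :=
      funext fun x => by rw [hLN, Finset.card_filter]
    rw [this]
    exact Finset.measurable_sum _ fun n _ =>
      Measurable.ite (hDmeas n) measurable_const measurable_const
  have hΨnn : ∀ m N, 0 ≤ Ψ m N := by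
    intro m N
    rw [hΨ]
    split
    · exact le_refl 0
    · exact mul_nonneg (hQnn m N) (Real.exp_pos _).le
  -- the main per-s bound
  have key : ∀ s : ℕ, 2 ≤ s →
      ((h / (s:ℝ) + Hr (1/(s:ℝ)) + (1/(s:ℝ)) * Real.log (K s) - 1/(s:ℝ) : ℝ) : EReal) ≤
      Filter.liminf (fun N : ℕ =>
        (((1 / (N : ℝ)) * ∫ y, Real.log (ZΨ β h N y) ∂P' : ℝ) : EReal)) atTop := by
    intro s hs
    have hs0 : 0 < s := by omega
    have hsR : (2:ℝ) ≤ (s:ℝ) := by exact_mod_cast hs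
    have hsR0 : (0:ℝ) < (s:ℝ) := by linarith
    obtain ⟨c₂, hc₂pos, hc₂⟩ := hQlb (1/(2*(s:ℝ))) (1/(s:ℝ)) (by positivity)
      (by apply one_div_lt_one_div_of_lt hsR0; linarith)
      (by rw [div_lt_one hsR0]; linarith) (1/(s:ℝ)) (by positivity)
    obtain ⟨c₁, hc₁pos, hc₁⟩ := hQub 1 one_pos
    set r : ℕ → ℝ := fun N => ((N/s : ℕ):ℝ)/(N:ℝ) * h + Real.log c₂/(N:ℝ) - 1/(s:ℝ)
      + Hr (((N/s : ℕ):ℝ)/(N:ℝ)) + ((N/s - 1 : ℕ):ℝ)/(N:ℝ) * Real.log (K s)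
      + Real.log (K (N % s + s))/(N:ℝ) with hrdef
    have hmain : ∀ N : ℕ, 2*s ≤ N →
        r N ≤ (1 / (N : ℝ)) * ∫ y, Real.log (ZΨ β h N y) ∂P' := by
      intro N hN
      have hN0 : 0 < N := by omega
      have hNR : (0:ℝ) < N := by exact_mod_cast hN0
      set M : ℕ := N / s with hMdef
      have hdm : s * M + N % s = N := Nat.div_add_mod N s
      have hmod : N % s < s := Nat.mod_lt N hs0
      have hM2 : 2 ≤ M := by rw [hMdef, Nat.le_div_iff_mul_le hs0]; omega
      have hM1 : 1 ≤ M := by omega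
      have hMN : M < N := Nat.div_lt_self hN0 (by omega)
      set R : ℕ := N % s + s with hRdef
      have hcomm : M * s = s * M := Nat.mul_comm M s
      have hMs2 : s * 2 ≤ s * M := Nat.mul_le_mul_left s hM2
      have hsplit : (M - 1) * s + R = N := by
        rw [hRdef, Nat.sub_one_mul]
        omega
      have hRge : s ≤ R := by omega
      have hRle : R ≤ 2*s := by omega
      have hR1 : 1 ≤ R := by omega
      -- casts
      have hdmR : (s:ℝ) * (M:ℝ) + ((N % s : ℕ):ℝ) = (N:ℝ) := by exact_mod_cast hdm
      have hmodR0 : (0:ℝ) ≤ ((N % s : ℕ):ℝ) := by positivity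
      have hmodRs : ((N % s : ℕ):ℝ) < (s:ℝ) := by exact_mod_cast hmod
      have hMR1 : (1:ℝ) ≤ (M:ℝ) := by exact_mod_cast hM1
      have hMNR : (M:ℝ) < (N:ℝ) := by exact_mod_cast hMN
      have hMIoo : (M:ℝ)/(N:ℝ) ∈ Set.Ioo (0:ℝ) 1 :=
        ⟨by positivity, (div_lt_one hNR).2 hMNR⟩
      have hmemuv : (M:ℝ)/(N:ℝ) ∈ Set.Icc (1/(2*(s:ℝ))) (1/(s:ℝ)) := by
        have hNs : (2:ℝ)*(s:ℝ) ≤ (N:ℝ) := by exact_mod_cast hN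
        constructor
        · rw [div_le_div_iff₀ (by positivity) hNR]
          nlinarith [hdmR, hmodRs, hMR1]
        · rw [div_le_div_iff₀ hNR hsR0]
          nlinarith [hdmR, hmodR0]
      -- Q and Ψ at (M, N)
      have hQl := hc₂ N M hmemuv
      have hQMpos : 0 < Q M N := lt_of_lt_of_le (by positivity) hQl
      have hHMN : H ((M:ℝ)/(N:ℝ)) = ((Hr ((M:ℝ)/(N:ℝ)) : ℝ) : EReal) := hHr _ hMIoo
      have hΨM : Ψ M N = Q M N * Real.exp ((N:ℝ) * Hr ((M:ℝ)/(N:ℝ))) := by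
        rw [hΨ, hHMN]
        simp [EReal.coe_ne_bot]
      have hΨMpos : 0 < Ψ M N := by rw [hΨM]; positivity
      -- the path event
      set a : ℕ → ℕ := fun j => if j = M - 1 then R else s with hadef
      set val : ℕ → ℕ := fun k => if k = M then N else k * s with hvaldef
      set A : Set Ω := ⋂ j ∈ Finset.range M, {x | η j x = a j} with hAdef
      have hAmeas : MeasurableSet A := by
        apply MeasurableSet.biInter (Finset.range M).countable_toSet
        intro j _
        exact (hηmeas j) (measurableSet_singleton (a j))
      have hPA : (P A).toReal = K s ^ (M-1) * K R := by
        have h1 : P A = ∏ j ∈ Finset.range M, P {x | η j x = a j} := by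
          apply hηindep.meas_biInter
          intro j _
          exact ⟨{a j}, measurableSet_singleton _, rfl⟩
        have h2 : ∀ j, (P {x | η j x = a j}).toReal = K (a j) := by
          intro j
          rw [hK]
          congr 1
          calc P {x | η j x = a j} = P.map (η j) {a j} := by
                rw [Measure.map_apply (hηmeas j) (measurableSet_singleton _)]; rfl
            _ = P.map (η 0) {a j} := by rw [hηident j]
            _ = P {x | η 0 x = a j} := by
                rw [Measure.map_apply (hηmeas 0) (measurableSet_singleton _)]; rfl
        rw [h1, ENNReal.toReal_prod]
        have hMsucc : M - 1 + 1 = M := by omega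
        calc ∏ j ∈ Finset.range M, (P {x | η j x = a j}).toReal
            = ∏ j ∈ Finset.range M, K (a j) := Finset.prod_congr rfl fun j _ => h2 j
          _ = (∏ j ∈ Finset.range (M-1), K (a j)) * K (a (M-1)) := by
              rw [← Finset.prod_range_succ, hMsucc]
          _ = K s ^ (M-1) * K R := by
              congr 1
              · rw [Finset.prod_congr rfl (fun j hj => ?_), Finset.prod_const,
                  Finset.card_range]
                rw [hadef]
                simp only
                rw [if_neg (by have := Finset.mem_range.1 hj; omega)]
              · rw [hadef]; simp
      set pA : ℝ := K s ^ (M-1) * K R with hpAdef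
      have hpApos : 0 < pA := mul_pos (pow_pos (hKpos s (by omega)) _) (hKpos R hR1)
      -- path structure on A
      have hxA : ∀ x ∈ A, ∀ j < M, η j x = a j := by
        intro x hx j hj
        exact Set.mem_iInter₂.1 hx j (Finset.mem_range.2 hj)
      have hτa : ∀ x ∈ A, ∀ k ≤ M, τ k x = if k = M then N else k * s := by
        intro x hx k hk
        rw [hτ, Finset.sum_congr rfl fun j hj =>
          hxA x hx j (lt_of_lt_of_le (Finset.mem_range.1 hj) hk)]
        by_cases hkM : k = M
        · subst hkM
          rw [if_pos rfl]
          have hMsucc : M - 1 + 1 = M := by omega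
          have hsp : ∑ j ∈ Finset.range M, a j
              = (∑ j ∈ Finset.range (M-1), a j) + a (M-1) := by
            rw [← Finset.sum_range_succ, hMsucc]
          rw [hsp, Finset.sum_congr rfl (fun j hj => ?_), Finset.sum_const,
            Finset.card_range, smul_eq_mul]
          · have haM : a (M-1) = R := by rw [hadef]; simp
            rw [haM]
            exact hsplit
          · rw [hadef]
            simp only
            rw [if_neg (by have := Finset.mem_range.1 hj; omega)]
        · rw [if_neg hkM]
          have hk' : k ≤ M - 1 := by omega
          rw [Finset.sum_congr rfl (fun j hj => ?_), Finset.sum_const,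
            Finset.card_range, smul_eq_mul]
          rw [hadef]
          simp only
          rw [if_neg (by have := Finset.mem_range.1 hj; omega)]
      have hτMx : ∀ x ∈ A, τ M x = N := by
        intro x hx
        rw [hτa x hx M le_rfl, if_pos rfl]
      have hvalle : ∀ k, 1 ≤ k → k ≤ M → 1 ≤ val k ∧ val k ≤ N := by
        intro k hk1 hkM
        rw [hvaldef]
        simp only
        by_cases hkM' : k = M
        · rw [if_pos hkM']; omega
        · rw [if_neg hkM']
          have h1 : 1 ≤ k * s := by
            have := Nat.mul_le_mul hk1 (by omega : 1 ≤ s)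
            omega
          have h2 : k * s ≤ (M-1) * s := Nat.mul_le_mul_right s (by omega)
          omega
      have hmem_filter : ∀ x ∈ A,
          (Finset.Icc 1 N).filter (fun n => ∃ k, τ k x = n)
            = (Finset.Icc 1 M).image val := by
        intro x hx
        ext n
        simp only [Finset.mem_filter, Finset.mem_image, Finset.mem_Icc]
        constructor
        · rintro ⟨⟨hn1, hnN⟩, k, hkτ⟩
          have hk1 : 1 ≤ k := by
            by_contra hc
            have hk0 : k = 0 := by omega
            rw [hk0, hτ0] at hkτ
            omega
          have hkM : k ≤ M := by
            by_contra hc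
            push_neg at hc
            have h1 := hτgap x M k hc.le
            rw [hτMx x hx] at h1
            omega
          refine ⟨k, ⟨hk1, hkM⟩, ?_⟩
          rw [hvaldef]
          simp only
          rw [← hkτ, hτa x hx k hkM]
        · rintro ⟨k, ⟨hk1, hkM⟩, hkval⟩
          constructor
          · rw [← hkval]
            exact ⟨(hvalle k hk1 hkM).1, (hvalle k hk1 hkM).2⟩
          · exact ⟨k, by rw [hτa x hx k hkM, ← hkval]⟩
      have hinj : Set.InjOn val ((Finset.Icc 1 M : Finset ℕ) : Set ℕ) := by
        intro k1 h1 k2 h2 heq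
        simp only [Finset.coe_Icc, Set.mem_Icc] at h1 h2
        rw [hvaldef] at heq
        simp only at heq
        have hlt : ∀ k, 1 ≤ k → k ≤ M → k ≠ M → k * s < N := by
          intro k _ hkM hkne
          have h3 : k * s ≤ (M-1) * s := Nat.mul_le_mul_right s (by omega)
          omega
        by_cases e1 : k1 = M <;> by_cases e2 : k2 = M
        · omega
        · rw [if_pos e1, if_neg e2] at heq
          have := hlt k2 h2.1 h2.2 e2
          omega
        · rw [if_neg e1, if_pos e2] at heq
          have := hlt k1 h1.1 h1.2 e1
          omega
        · rw [if_neg e1, if_neg e2] at heq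
          exact Nat.eq_of_mul_eq_mul_right hs0 heq
      have hLNx : ∀ x ∈ A, LN N x = M := by
        intro x hx
        rw [hLN, hmem_filter x hx, Finset.card_image_of_injOn hinj, Nat.card_Icc]
        omega
      have hδN : ∀ x ∈ A, ∃ k, τ k x = N := fun x hx => ⟨M, hτMx x hx⟩
      have hsumδ : ∀ (y : Ω'), ∀ x ∈ A,
          ∑ j ∈ Finset.Icc 1 N, (β * ω j y + h) * (if ∃ k, τ k x = j then (1:ℝ) else 0)
            = ∑ k ∈ Finset.Icc 1 M, (β * ω (val k) y + h) := by
        intro y x hx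
        rw [Finset.sum_congr rfl (fun j _ => by rw [mul_ite, mul_one, mul_zero]),
          ← Finset.sum_filter, hmem_filter x hx,
          Finset.sum_image (fun k hk l hl hkl => hinj (by simpa using hk) (by simpa using hl) hkl)]
      -- integrand
      set F : Ω' → Ω → ℝ := fun y x =>
        Real.exp (∑ j ∈ Finset.Icc 1 N, (β * ω j y + h) * (if ∃ k, τ k x = j then (1:ℝ) else 0))
          * Ψ (LN N x) N * (if ∃ k, τ k x = N then (1:ℝ) else 0) with hFdef
      have hZeq : ∀ y, ZΨ β h N y = ∫ x, F y x ∂P := fun y => hZΨ β h N y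
      have hFnn : ∀ y x, 0 ≤ F y x := by
        intro y x
        apply mul_nonneg (mul_nonneg (Real.exp_pos _).le (hΨnn _ _))
        split <;> norm_num
      set Cexp : Ω' → ℝ := fun y => Real.exp (∑ j ∈ Finset.Icc 1 N, (β * |ω j y| + |h|))
        with hCexpdef
      set CΨ : ℝ := c₁ * Real.exp ((1 + Mb) * N) with hCΨdef
      have hCΨpos : 0 < CΨ := by positivity
      have hΨle : ∀ L' : ℕ, L' ≤ N → Ψ L' N ≤ CΨ := by
        intro L' hL'
        rw [hΨ]
        split
        · exact hCΨpos.le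
        · have hL'mem : ((L':ℝ))/(N:ℝ) ∈ Set.Icc (0:ℝ) 1 :=
            ⟨by positivity, (div_le_one hNR).2 (by exact_mod_cast hL')⟩
          have ht : (H (((L':ℝ))/(N:ℝ))).toReal ≤ Mb := hMb _ hL'mem
          calc Q L' N * Real.exp ((N:ℝ) * (H (((L':ℝ))/(N:ℝ))).toReal)
              ≤ (c₁ * Real.exp (1 * (N:ℝ))) * Real.exp ((N:ℝ) * Mb) := by
                apply mul_le_mul (hc₁ N L' hL')
                  (Real.exp_le_exp.2 (mul_le_mul_of_nonneg_left ht hNR.le))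
                  (Real.exp_pos _).le (by positivity)
            _ = CΨ := by
                rw [hCΨdef, mul_assoc, ← Real.exp_add]
                congr 1
                ring
      have hLNle : ∀ x, LN N x ≤ N := by
        intro x
        rw [hLN]
        calc ((Finset.Icc 1 N).filter _).card ≤ (Finset.Icc 1 N).card :=
              Finset.card_filter_le _ _
          _ = N := by rw [Nat.card_Icc]; omega
      have hCexppos : ∀ y, 0 < Cexp y := fun y => Real.exp_pos _
      have hFle : ∀ y x, F y x ≤ Cexp y * CΨ := by
        intro y x
        rw [hFdef]
        simp only
        have h1 : Real.exp (∑ j ∈ Finset.Icc 1 N,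
            (β * ω j y + h) * (if ∃ k, τ k x = j then (1:ℝ) else 0)) ≤ Cexp y := by
          rw [hCexpdef]
          apply Real.exp_le_exp.2
          apply Finset.sum_le_sum
          intro j _
          have habs1 : |β * ω j y + h| ≤ β * |ω j y| + |h| := by
            calc |β * ω j y + h| ≤ |β * ω j y| + |h| := abs_add_le _ _
              _ = β * |ω j y| + |h| := by rw [abs_mul, abs_of_nonneg hβ]
          split
          · rw [mul_one]; exact le_trans (le_abs_self _) habs1
          · rw [mul_zero]; positivity
        have h2 : Ψ (LN N x) N ≤ CΨ := hΨle _ (hLNle x)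
        have h3 : (if ∃ k, τ k x = N then (1:ℝ) else 0) ≤ 1 := by split <;> norm_num
        have h4 : (0:ℝ) ≤ (if ∃ k, τ k x = N then (1:ℝ) else 0) := by split <;> norm_num
        calc Real.exp _ * Ψ (LN N x) N * (if ∃ k, τ k x = N then (1:ℝ) else 0)
            ≤ (Cexp y * CΨ) * 1 := by
              apply mul_le_mul _ h3 h4 (by positivity)
              exact mul_le_mul h1 h2 (hΨnn _ _) (hCexppos y).le
          _ = Cexp y * CΨ := mul_one _
      have hFmeas : ∀ y, Measurable (F y) := by
        intro y
        apply Measurable.mul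
        apply Measurable.mul
        · apply Measurable.exp
          apply Finset.measurable_sum
          intro j _
          exact measurable_const.mul
            (Measurable.ite (hDmeas j) measurable_const measurable_const)
        · exact (measurable_from_top (f := fun n => Ψ n N)).comp (hLNmeas N)
        · exact Measurable.ite (hDmeas N) measurable_const measurable_const
      have hFint : ∀ y, Integrable (F y) P := fun y =>
        (integrable_const (Cexp y * CΨ)).mono' (hFmeas y).aestronglyMeasurable
          (Filter.Eventually.of_forall fun x => by
            rw [Real.norm_eq_abs, abs_of_nonneg (hFnn y x)]; exact hFle y x)
      -- lower bound for Z
      set W : Ω' → ℝ := fun y => ∑ k ∈ Finset.Icc 1 M, (β * ω (val k) y + h) with hWdef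
      have hVpos : ∀ y, 0 < Real.exp (W y) * Ψ M N * pA := fun y => by positivity
      have hZlow : ∀ y, Real.exp (W y) * Ψ M N * pA ≤ ZΨ β h N y := by
        intro y
        rw [hZeq y]
        have hind : ∀ x, A.indicator (fun _ => Real.exp (W y) * Ψ M N) x ≤ F y x := by
          intro x
          by_cases hx : x ∈ A
          · rw [Set.indicator_of_mem hx]
            have hFx : F y x = Real.exp (W y) * Ψ M N := by
              rw [hFdef]
              simp only
              rw [hsumδ y x hx, hLNx x hx, if_pos (hδN x hx), mul_one, hWdef]
            rw [hFx]
          · rw [Set.indicator_of_notMem hx]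
            exact hFnn y x
        calc Real.exp (W y) * Ψ M N * pA
            = ∫ x, A.indicator (fun _ => Real.exp (W y) * Ψ M N) x ∂P := by
              rw [integral_indicator_const _ hAmeas, measureReal_def, hPA, smul_eq_mul]
              ring
          _ ≤ ∫ x, F y x ∂P :=
              integral_mono ((integrable_const _).indicator hAmeas) (hFint y) hind
      have hZpos : ∀ y, 0 < ZΨ β h N y := fun y => lt_of_lt_of_le (hVpos y) (hZlow y)
      have hZup : ∀ y, ZΨ β h N y ≤ Cexp y * CΨ := by
        intro y
        rw [hZeq y]
        calc ∫ x, F y x ∂P ≤ ∫ _x, Cexp y * CΨ ∂P :=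
              integral_mono (hFint y) (integrable_const _) (hFle y)
          _ = Cexp y * CΨ := by simp
      -- log bounds
      set Llow : Ω' → ℝ := fun y =>
        W y + (Real.log (Q M N) + ((N:ℝ) * Hr ((M:ℝ)/(N:ℝ)) + Real.log pA)) with hLlowdef
      have hloglow : ∀ y, Llow y ≤ Real.log (ZΨ β h N y) := by
        intro y
        have h1 : Real.log (Real.exp (W y) * Ψ M N * pA) ≤ Real.log (ZΨ β h N y) :=
          Real.log_le_log (hVpos y) (hZlow y)
        have h2 : Llow y = Real.log (Real.exp (W y) * Ψ M N * pA) := by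
          rw [Real.log_mul (by positivity) hpApos.ne',
            Real.log_mul (Real.exp_pos _).ne' hΨMpos.ne', Real.log_exp, hΨM,
            Real.log_mul hQMpos.ne' (Real.exp_pos _).ne', Real.log_exp, hLlowdef]
          ring
        rw [h2]
        exact h1
      set Uup : Ω' → ℝ := fun y =>
        (∑ j ∈ Finset.Icc 1 N, (β * |ω j y| + |h|)) + (Real.log c₁ + (1 + Mb) * (N:ℝ))
        with hUupdef
      have hlogup : ∀ y, Real.log (ZΨ β h N y) ≤ Uup y := by
        intro y
        have h1 : Real.log (ZΨ β h N y) ≤ Real.log (Cexp y * CΨ) :=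
          Real.log_le_log (hZpos y) (hZup y)
        have h2 : Real.log (Cexp y * CΨ) = Uup y := by
          rw [Real.log_mul (hCexppos y).ne' hCΨpos.ne', hCΨdef, hCexpdef,
            Real.log_mul hc₁pos.ne' (Real.exp_pos _).ne', Real.log_exp, Real.log_exp, hUupdef]
        rw [← h2]
        exact h1
      -- integrability
      have hvalge1 : ∀ k, 1 ≤ k → 1 ≤ val k := by
        intro k hk
        rw [hvaldef]
        simp only
        split
        · omega
        · have := Nat.mul_le_mul hk (by omega : 1 ≤ s); omega
      have hterm_int : ∀ j : ℕ, 1 ≤ j → Integrable (fun y => β * ω j y + h) P' :=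
        fun j hj => ((hωint j hj).1.const_mul β).add (integrable_const h)
      have hWint : Integrable W P' := by
        rw [hWdef]
        apply integrable_finset_sum
        intro k hk
        exact hterm_int (val k) (hvalge1 k (Finset.mem_Icc.1 hk).1)
      have hLlowint : Integrable Llow P' := hWint.add (integrable_const _)
      have hUupint : Integrable Uup P' := by
        apply Integrable.add _ (integrable_const _)
        apply integrable_finset_sum
        intro j hj
        exact ((hωint j (Finset.mem_Icc.1 hj).1).1.abs.const_mul β).add (integrable_const _)
      have hGmeas : Measurable (fun p : Ω' × Ω => F p.1 p.2) := by
        rw [hFdef]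
        apply Measurable.mul
        apply Measurable.mul
        · apply Measurable.exp
          apply Finset.measurable_sum
          intro j _
          apply Measurable.mul
          · exact (measurable_const.mul ((hωmeas j).comp measurable_fst)).add measurable_const
          · exact Measurable.ite ((hDmeas j).preimage measurable_snd)
              measurable_const measurable_const
        · exact (measurable_from_top (f := fun n => Ψ n N)).comp
            ((hLNmeas N).comp measurable_snd)
        · exact Measurable.ite ((hDmeas N).preimage measurable_snd)
            measurable_const measurable_const
      have hZmeas : AEStronglyMeasurable (fun y => Real.log (ZΨ β h N y)) P' := by
        have h1 : StronglyMeasurable (fun y => ∫ x, F y x ∂P) :=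
          hGmeas.stronglyMeasurable.integral_prod_right'
        have h2 : (fun y => Real.log (ZΨ β h N y)) = fun y => Real.log (∫ x, F y x ∂P) :=
          funext fun y => by rw [hZeq y]
        rw [h2]
        exact (Real.measurable_log.comp h1.measurable).aestronglyMeasurable
      have hlogint : Integrable (fun y => Real.log (ZΨ β h N y)) P' := by
        refine (hLlowint.abs.add hUupint.abs).mono' hZmeas
          (Filter.Eventually.of_forall fun y => ?_)
        simp only [Pi.add_apply]
        rw [Real.norm_eq_abs, abs_le]
        constructor
        · have h1 := neg_abs_le (Llow y)
          have h2 := hloglow y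
          have h3 := abs_nonneg (Uup y)
          linarith
        · have h1 := le_abs_self (Uup y)
          have h2 := hlogup y
          have h3 := abs_nonneg (Llow y)
          linarith
      -- compute the lower integral
      have hWval : ∫ y, W y ∂P' = (M:ℝ) * h := by
        rw [hWdef]
        rw [integral_finset_sum _ fun k hk =>
          hterm_int (val k) (hvalge1 k (Finset.mem_Icc.1 hk).1)]
        have hterm : ∀ k ∈ Finset.Icc 1 M, ∫ y, (β * ω (val k) y + h) ∂P' = h := by
          intro k hk
          have hv1 := hvalge1 k (Finset.mem_Icc.1 hk).1
          rw [integral_add ((hωint (val k) hv1).1.const_mul β) (integrable_const h),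
            integral_const_mul, (hωint (val k) hv1).2]
          simp
        rw [Finset.sum_congr rfl hterm, Finset.sum_const, Nat.card_Icc, nsmul_eq_mul]
        have hMc : M + 1 - 1 = M := by omega
        rw [hMc]
      have hLlowval : ∫ y, Llow y ∂P'
          = (M:ℝ) * h + (Real.log (Q M N) + ((N:ℝ) * Hr ((M:ℝ)/(N:ℝ)) + Real.log pA)) := by
        rw [hLlowdef, integral_add hWint (integrable_const _), integral_const, hWval]
        simp
      have hmono : ∫ y, Llow y ∂P' ≤ ∫ y, Real.log (ZΨ β h N y) ∂P' :=
        integral_mono hLlowint hlogint hloglow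
      -- assemble
      have hlogQ : Real.log c₂ + (-(1/(s:ℝ)) * (N:ℝ)) ≤ Real.log (Q M N) := by
        have h1 := Real.log_le_log (by positivity) hQl
        rwa [Real.log_mul hc₂pos.ne' (Real.exp_pos _).ne', Real.log_exp] at h1
      have hlogpA : Real.log pA = ((M-1 : ℕ):ℝ) * Real.log (K s) + Real.log (K R) := by
        rw [hpAdef, Real.log_mul (pow_pos (hKpos s (by omega)) _).ne' (hKpos R hR1).ne',
          Real.log_pow]
      have hchain : (M:ℝ) * h + (Real.log c₂ - 1/(s:ℝ) * (N:ℝ)) + (N:ℝ) * Hr ((M:ℝ)/(N:ℝ))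
          + (((M-1 : ℕ):ℝ) * Real.log (K s) + Real.log (K R))
          ≤ ∫ y, Real.log (ZΨ β h N y) ∂P' := by
        refine le_trans ?_ (le_trans (le_of_eq hLlowval.symm) hmono)
        rw [hlogpA]
        have := hlogQ
        linarith
      have hrN : r N = (1/(N:ℝ)) * ((M:ℝ) * h + (Real.log c₂ - 1/(s:ℝ) * (N:ℝ))
          + (N:ℝ) * Hr ((M:ℝ)/(N:ℝ)) + (((M-1 : ℕ):ℝ) * Real.log (K s) + Real.log (K R))) := by
        rw [hrdef]
        simp only [← hMdef, ← hRdef]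
        field_simp
        ring
      rw [hrN]
      exact mul_le_mul_of_nonneg_left hchain (by positivity)
    -- convergence of r
    have hmdiv : Tendsto (fun N : ℕ => ((N/s : ℕ):ℝ)/(N:ℝ)) atTop (nhds (1/(s:ℝ))) := by
      apply tendsto_of_tendsto_of_tendsto_of_le_of_le'
        (g := fun N : ℕ => 1/(s:ℝ) - 1/(N:ℝ)) (h := fun _ : ℕ => 1/(s:ℝ))
      · simpa using (tendsto_const_nhds : Tendsto (fun _ : ℕ => 1/(s:ℝ)) atTop _).sub tendsto_one_div_atTop_nhds_zero_nat
      · exact tendsto_const_nhds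
      · filter_upwards [eventually_ge_atTop 1] with N hN
        have hNR : (0:ℝ) < N := by exact_mod_cast hN
        have hdm : (s:ℝ) * ((N/s : ℕ):ℝ) + ((N % s : ℕ):ℝ) = N := by
          exact_mod_cast Nat.div_add_mod N s
        have hmod : ((N % s : ℕ):ℝ) < s := by exact_mod_cast Nat.mod_lt N hs0
        rw [sub_le_iff_le_add, ← add_div, div_le_div_iff₀ hsR0 hNR]
        nlinarith [hdm, hmod, hNR, hsR0]
      · filter_upwards [eventually_ge_atTop 1] with N hN
        have hNR : (0:ℝ) < N := by exact_mod_cast hN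
        have hdm : (s:ℝ) * ((N/s : ℕ):ℝ) + ((N % s : ℕ):ℝ) = N := by
          exact_mod_cast Nat.div_add_mod N s
        have hmodnn : (0:ℝ) ≤ ((N % s : ℕ):ℝ) := by positivity
        rw [div_le_div_iff₀ hNR hsR0]
        nlinarith [hdm, hmodnn]
    have hm1div : Tendsto (fun N : ℕ => ((N/s - 1 : ℕ):ℝ)/(N:ℝ)) atTop (nhds (1/(s:ℝ))) := by
      have h1 := hmdiv.sub tendsto_one_div_atTop_nhds_zero_nat
      rw [sub_zero] at h1
      refine h1.congr' ?_
      filter_upwards [eventually_ge_atTop s] with N hN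
      have h2 : 1 ≤ N / s := (Nat.one_le_div_iff hs0).2 hN
      rw [Nat.cast_sub h2, Nat.cast_one, sub_div, one_div]
    have hHrc : Tendsto (fun N : ℕ => Hr (((N/s : ℕ):ℝ)/(N:ℝ))) atTop (nhds (Hr (1/(s:ℝ)))) := by
      have hmem : (1/(s:ℝ)) ∈ Set.Ioo (0:ℝ) 1 := ⟨by positivity, by rw [div_lt_one hsR0]; linarith⟩
      have hcont : ContinuousAt Hr (1/(s:ℝ)) :=
        ((hHanal.continuousOn).continuousAt (Ioo_mem_nhds hmem.1 hmem.2) : ContinuousAt Hr _)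
      exact hcont.tendsto.comp hmdiv
    have hlogR : Tendsto (fun N : ℕ => Real.log (K (N % s + s))/(N:ℝ)) atTop (nhds 0) := by
      have hne : (Finset.Icc s (2*s)).Nonempty := ⟨s, by simp [Finset.mem_Icc]; omega⟩
      set B := (Finset.Icc s (2*s)).sup' hne (fun i => |Real.log (K i)|) with hBdef
      have hB : ∀ N : ℕ, |Real.log (K (N % s + s))| ≤ B := by
        intro N
        apply Finset.le_sup' (fun i => |Real.log (K i)|)
        have := Nat.mod_lt N hs0
        simp only [Finset.mem_Icc]
        omega
      apply tendsto_of_tendsto_of_tendsto_of_le_of_le'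
        (g := fun N : ℕ => (-B)/(N:ℝ)) (h := fun N : ℕ => B/(N:ℝ))
      · exact tendsto_const_div_atTop_nhds_zero_nat (-B)
      · exact tendsto_const_div_atTop_nhds_zero_nat B
      · filter_upwards [eventually_ge_atTop 1] with N hN
        have hNR : (0:ℝ) < N := by exact_mod_cast hN
        exact (div_le_div_iff_of_pos_right hNR).2 ((abs_le.1 (hB N)).1)
      · filter_upwards [eventually_ge_atTop 1] with N hN
        have hNR : (0:ℝ) < N := by exact_mod_cast hN
        exact (div_le_div_iff_of_pos_right hNR).2 ((abs_le.1 (hB N)).2)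
    have hrt : Tendsto r atTop
        (nhds (1/(s:ℝ) * h + 0 - 1/(s:ℝ) + Hr (1/(s:ℝ)) + 1/(s:ℝ) * Real.log (K s) + 0)) := by
      rw [hrdef]
      exact ((((hmdiv.mul_const h).add
        (tendsto_const_div_atTop_nhds_zero_nat (Real.log c₂))).sub
        tendsto_const_nhds).add hHrc).add (hm1div.mul_const (Real.log (K s))) |>.add hlogR
    have hle : ((1/(s:ℝ) * h + 0 - 1/(s:ℝ) + Hr (1/(s:ℝ)) + 1/(s:ℝ) * Real.log (K s) + 0 : ℝ) : EReal) ≤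
        Filter.liminf (fun N : ℕ =>
          (((1 / (N : ℝ)) * ∫ y, Real.log (ZΨ β h N y) ∂P' : ℝ) : EReal)) atTop := by
      have h1 : Filter.liminf (fun N : ℕ => ((r N : ℝ) : EReal)) atTop
          = ((1/(s:ℝ) * h + 0 - 1/(s:ℝ) + Hr (1/(s:ℝ)) + 1/(s:ℝ) * Real.log (K s) + 0 : ℝ) : EReal) :=
        (EReal.tendsto_coe.2 hrt).liminf_eq
      rw [← h1]
      have hev : ∀ᶠ N : ℕ in atTop, ((r N : ℝ) : EReal) ≤
          (((1 / (N : ℝ)) * ∫ y, Real.log (ZΨ β h N y) ∂P' : ℝ) : EReal) := by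
        filter_upwards [eventually_ge_atTop (2*s)] with N hN
        exact EReal.coe_le_coe_iff.2 (hmain N hN)
      exact Filter.liminf_le_liminf hev
    have heq : h / (s:ℝ) + Hr (1/(s:ℝ)) + (1/(s:ℝ)) * Real.log (K s) - 1/(s:ℝ)
        = 1/(s:ℝ) * h + 0 - 1/(s:ℝ) + Hr (1/(s:ℝ)) + 1/(s:ℝ) * Real.log (K s) + 0 := by ring
    rw [heq]
    exact hle
  -- conclusion: let s → ∞
  have hgt : Tendsto (fun s : ℕ => (h / (s:ℝ) + Hr (1/(s:ℝ)) + (1/(s:ℝ)) * Real.log (K s) - 1/(s:ℝ)))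
      atTop (nhds ((H 0).toReal)) := by
    have t1 : Tendsto (fun s : ℕ => h / (s:ℝ)) atTop (nhds 0) :=
      tendsto_const_div_atTop_nhds_zero_nat h
    have t4 : Tendsto (fun s : ℕ => 1 / (s:ℝ)) atTop (nhds 0) :=
      tendsto_one_div_atTop_nhds_zero_nat
    have hsub : Tendsto (fun s : ℕ => (1:ℝ)/s) atTop (nhdsWithin 0 (Set.Icc 0 1)) := by
      rw [tendsto_nhdsWithin_iff]
      refine ⟨tendsto_one_div_atTop_nhds_zero_nat, ?_⟩
      filter_upwards [eventually_ge_atTop 1] with s hs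
      have hs1 : (1:ℝ) ≤ s := by exact_mod_cast hs
      exact ⟨by positivity, by rw [div_le_one (by linarith)]; exact hs1⟩
    have hHt : Tendsto (fun s : ℕ => H ((1:ℝ)/s)) atTop (nhds (H 0)) :=
      Filter.Tendsto.comp (hHcont 0 h0mem) hsub
    have hHt2 : Tendsto (fun s : ℕ => ((Hr ((1:ℝ)/s) : ℝ) : EReal)) atTop (nhds (H 0)) := by
      refine hHt.congr' ?_
      filter_upwards [eventually_ge_atTop 2] with s hs
      have hs2 : (2:ℝ) ≤ s := by exact_mod_cast hs
      exact hHr _ ⟨by positivity, by rw [div_lt_one (by linarith)]; linarith⟩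
    have t2 : Tendsto (fun s : ℕ => Hr ((1:ℝ)/s)) atTop (nhds ((H 0).toReal)) := by
      apply EReal.tendsto_coe.1
      rw [← hH0eq]
      exact hHt2
    have hKlog : Tendsto (fun s : ℕ => Real.log (K s * (s:ℝ)^(1+α))) atTop (nhds (Real.log C_K)) :=
      ((Real.continuousAt_log hCK.ne').tendsto).comp hKasymp
    have hlogdiv : Tendsto (fun s : ℕ => Real.log s / (s:ℝ)) atTop (nhds 0) :=
      (Real.isLittleO_log_id_atTop.tendsto_div_nhds_zero).comp tendsto_natCast_atTop_atTop
    have t3' : Tendsto (fun s : ℕ => (1/(s:ℝ)) * Real.log (K s * (s:ℝ)^(1+α))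
        - (1+α) * (Real.log s / (s:ℝ))) atTop (nhds (0 * Real.log C_K - (1+α) * 0)) :=
      (t4.mul hKlog).sub (tendsto_const_nhds.mul hlogdiv)
    have t3 : Tendsto (fun s : ℕ => (1/(s:ℝ)) * Real.log (K s)) atTop (nhds 0) := by
      have heq : ∀ᶠ s : ℕ in atTop, (1/(s:ℝ)) * Real.log (K s * (s:ℝ)^(1+α))
          - (1+α) * (Real.log s / (s:ℝ)) = (1/(s:ℝ)) * Real.log (K s) := by
        filter_upwards [eventually_ge_atTop 1] with s hs
        have hs0 : (0:ℝ) < s := by exact_mod_cast Nat.lt_of_lt_of_le Nat.zero_lt_one hs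
        rw [Real.log_mul (hKpos s hs).ne' (Real.rpow_pos_of_pos hs0 _).ne',
          Real.log_rpow hs0]
        ring
      have := t3'.congr' heq
      simpa using this
    have := ((t1.add t2).add t3).sub t4
    simpa using this
  rw [hH0eq]
  refine le_of_tendsto (EReal.tendsto_coe.2 hgt) ?_
  filter_upwards [eventually_ge_atTop 2] with s hs
  exact key s hs
end
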